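/- The complete list of solutions (d; m_1, ..., m_k) with 1 ≤ k ≤ 8, d ≥ 1, and m_1 ≥ ... ≥ m_k ≥ 1 of the system ∑ m_i = 3d - 1 and ∑ m_i² = d² + 1 is: (1; 1, 1), (2; 1,1,1,1,1), (3; 2,1,1,1,1,1,1), (4; 2,2,2,1,1,1,1,1), (5; 2,2,2,2,2,2,1,1), and (6; 3,2,2,2,2,2,2,2). -/

import Mathlib

set_option maxRecDepth 100000

def gen : ℕ → ℕ → ℕ → List (List ℕ)
  | _, 0, _ => [[]]
  | _, _+1, 0 => []
  | bound, s+1, len+1 =>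
    (List.range' 1 bound).flatMap fun h =>
      if h ≤ s+1 then (gen h (s+1-h) len).map (h :: ·) else []

lemma mem_gen : ∀ (m : List ℕ) (bound s len : ℕ), m.Pairwise (· ≥ ·) →
    (∀ x ∈ m, 1 ≤ x ∧ x ≤ bound) → m.sum = s → m.length ≤ len → m ∈ gen bound s len
  | [], bound, s, len, _, _, hs, _ => by
      simp at hs; subst hs; cases len <;> simp [gen]
  | h :: t, bound, s, len, hsort, hb, hs, hl => by
      cases len with
      | zero => simp at hl
      | succ len =>
        have hh1 : 1 ≤ h := (hb h (List.mem_cons_self)).1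
        have hhb : h ≤ bound := (hb h (List.mem_cons_self)).2
        have hsum : h + t.sum = s := by simpa using hs
        cases s with
        | zero => omega
        | succ s =>
          have ht : t ∈ gen h (s + 1 - h) len := by
            apply mem_gen t h (s + 1 - h) len (List.Pairwise.of_cons hsort)
            · intro x hx
              exact ⟨(hb x (List.mem_cons_of_mem _ hx)).1,
                List.rel_of_pairwise_cons hsort hx⟩
            · omega
            · simpa using hl
          simp only [gen, List.mem_flatMap]
          refine ⟨h, ?_, ?_⟩
          · rw [List.mem_range'_1]; omega
          · rw [if_pos (by omega)]
            exact List.mem_map_of_mem ht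

lemma list_cauchy : ∀ l : List ℤ, l.sum ^ 2 ≤ l.length * (l.map (· ^ 2)).sum
  | [] => by simp
  | a :: t => by
      have ih := list_cauchy t
      have hq : (0:ℤ) ≤ (t.map (· ^ 2)).sum :=
        List.sum_nonneg (by simp; intro x _; positivity)
      simp only [List.sum_cons, List.map_cons, List.length_cons]
      push_cast
      rcases Nat.eq_zero_or_pos t.length with h0 | h1
      · have ht0 : t = [] := List.length_eq_zero_iff.mp h0
        subst ht0; simp
      · have hn1 : (1:ℤ) ≤ (t.length : ℤ) := by exact_mod_cast h1
        nlinarith [sq_nonneg ((t.length : ℤ) * a - t.sum), ih, hq, hn1,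
          mul_nonneg (by linarith : (0:ℤ) ≤ (t.length:ℤ)) hq]

lemma cast_list_sum (l : List ℕ) : ((l.sum : ℕ) : ℤ) = (l.map Int.ofNat).sum := by
  induction l with
  | nil => simp
  | cons a t ih =>
      simp only [List.map_cons, List.sum_cons, Nat.cast_add, ih, Int.ofNat_eq_natCast]

lemma cast_sq_sum (l : List ℕ) :
    (((l.map (fun x => x ^ 2)).sum : ℕ) : ℤ) = (l.map (fun x : ℕ => (x : ℤ) ^ 2)).sum := by
  induction l with
  | nil => simp
  | cons a t ih =>
      simp only [List.map_cons, List.sum_cons, Nat.cast_add, Nat.cast_pow, ih]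

lemma coe_flat (m : List ℕ) :
    (m.flatMap fun a => [((a : ℕ) : ℤ)]) = m.map (fun x : ℕ => (x : ℤ)) := by
  induction m with
  | nil => rfl
  | cons a t ih => simp [List.flatMap_cons, ih]

lemma check_gen : ∀ d ∈ [1,2,3,4,5,6,7], ∀ m ∈ gen d (3*d-1) 8,
    (m.map (fun x => x ^ 2)).sum = d ^ 2 + 1 →
    (d, m) ∈ [(1, [1, 1]), (2, [1, 1, 1, 1, 1]), (3, [2, 1, 1, 1, 1, 1, 1]),
      (4, [2, 2, 2, 1, 1, 1, 1, 1]), (5, [2, 2, 2, 2, 2, 2, 1, 1]),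
      (6, [3, 2, 2, 2, 2, 2, 2, 2])] := by decide

/-- The complete list of solutions `(d; m_1, ..., m_k)` with `1 ≤ k ≤ 8`, `d ≥ 1`,
and `m_1 ≥ ... ≥ m_k ≥ 1` of the system `∑ m_i = 3d - 1` and `∑ m_i² = d² + 1`. -/
theorem diophantine_complete_list (d : ℕ) (m : List ℕ)
    (hk1 : 1 ≤ m.length) (hk8 : m.length ≤ 8) (hd : 1 ≤ d)
    (hsort : m.Pairwise (· ≥ ·)) (hpos : ∀ x ∈ m, 1 ≤ x)
    (h1 : ((m.map (Int.ofNat)).sum) = 3 * (d : ℤ) - 1)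
    (h2 : ((m.map (fun x => (x : ℤ) ^ 2)).sum) = (d : ℤ) ^ 2 + 1) :
    (d, m) ∈ [(1, [1, 1]), (2, [1, 1, 1, 1, 1]), (3, [2, 1, 1, 1, 1, 1, 1]),
      (4, [2, 2, 2, 1, 1, 1, 1, 1]), (5, [2, 2, 2, 2, 2, 2, 1, 1]),
      (6, [3, 2, 2, 2, 2, 2, 2, 2])] := by
  -- normalize the monadic coercion in h2
  have e : (do let a ← m; pure ((a:ℕ):ℤ) : List ℤ) = m.map (fun x : ℕ => (x:ℤ)) :=
    coe_flat m
  rw [e, List.map_map] at h2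
  have h2' : (m.map (fun x : ℕ => (x : ℤ) ^ 2)).sum = (d : ℤ) ^ 2 + 1 := by
    rw [← h2]; rfl
  have hcast1 : ((m.sum : ℕ) : ℤ) = 3 * (d : ℤ) - 1 := by rw [cast_list_sum, h1]
  have hcast2 : (((m.map (fun x => x ^ 2)).sum : ℕ) : ℤ) = (d : ℤ) ^ 2 + 1 := by
    rw [cast_sq_sum, h2']
  have hsum : m.sum = 3 * d - 1 := by omega
  have hsq : (m.map (fun x => x ^ 2)).sum = d ^ 2 + 1 := by
    have hx : (((m.map (fun x => x ^ 2)).sum : ℕ) : ℤ) = ((d ^ 2 + 1 : ℕ) : ℤ) := by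
      rw [hcast2]; push_cast; ring
    exact_mod_cast hx
  have hled : ∀ x ∈ m, x ≤ d := by
    intro x hx
    have h1' : x ^ 2 ≤ (m.map (fun x => x ^ 2)).sum :=
      List.single_le_sum (by simp) _ (List.mem_map_of_mem hx)
    by_contra hc
    have h2'' : (d+1)^2 ≤ x^2 := Nat.pow_le_pow_left (by omega) 2
    nlinarith
  have hcs := list_cauchy (m.map (Int.ofNat))
  simp only [List.map_map, Function.comp_def, Int.ofNat_eq_natCast,
    List.length_map] at hcs
  rw [h2'] at hcs
  rw [show (m.map (Int.ofNat)).sum = ((m.sum : ℕ) : ℤ) from (cast_list_sum m).symm,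
    hcast1] at hcs
  have hd7 : d ≤ 7 := by
    by_contra hc
    have hd8 : (8 : ℤ) ≤ (d : ℤ) := by exact_mod_cast (by omega : 8 ≤ d)
    have hk8' : (m.length : ℤ) ≤ 8 := by exact_mod_cast hk8
    have hk0' : (0 : ℤ) ≤ (m.length : ℤ) := by positivity
    nlinarith
  have hdin : d ∈ [1,2,3,4,5,6,7] := by interval_cases d <;> simp
  exact check_gen d hdin m
    (mem_gen m d (3*d-1) 8 hsort (fun x hx => ⟨hpos x hx, hled x hx⟩) hsum hk8) hsq
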